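/- The operator Y factorizes through X on the basis φ_n: for every integer n ≥ 1 and every integer x, (Y φ_n(·;α))(x) = (X g)(x), where g : ℤ → ℝ is the function g = n(N − β − n) · φ_n(·;α) + n(n − N − 1) · φ_{n−1}(·;α). -/

import Mathlib

/-- Pochhammer symbol `(a)_k = a (a+1) ⋯ (a+k-1)`, with `(a)_0 = 1`. -/
noncomputable def poch (a : ℝ) (k : ℕ) : ℝ := ∏ i ∈ Finset.range k, (a + (i : ℝ))

/-- Basis functions `φ_n(x;α) = (-x)_n / (α-x)_n`. -/
noncomputable def phi (α : ℝ) (n : ℕ) (x : ℤ) : ℝ :=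
  poch (-(x : ℝ)) n / poch (α - (x : ℝ)) n

/-- The difference operator `X`: `(X f)(x) = (x-α) f(x) - x f(x-1)`. -/
noncomputable def Xop (α : ℝ) (f : ℤ → ℝ) (x : ℤ) : ℝ :=
  ((x : ℝ) - α) * f x - (x : ℝ) * f (x - 1)

/-- Coefficients of the difference operator `Y`. -/
noncomputable def A1 (α β : ℝ) (N : ℕ) (x : ℝ) : ℝ := (x - α) * (x - (N : ℝ)) * (x + 1 - α)
noncomputable def A2 (α β : ℝ) (N : ℕ) (x : ℝ) : ℝ := x * (x - α) * (x + β - α - (N : ℝ))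
noncomputable def A0 (α β : ℝ) (N : ℕ) (x : ℝ) : ℝ :=
  (x - α) * (-2 * x ^ 2 + (2 * α - 1 + 2 * (N : ℝ) - β) * x - (N : ℝ) * (α - 1))

/-- The difference operator `Y`: `(Y f)(x) = A₁(x) f(x+1) + A₂(x) f(x-1) + A₀(x) f(x)`. -/
noncomputable def Yop (α β : ℝ) (N : ℕ) (f : ℤ → ℝ) (x : ℤ) : ℝ :=
  A1 α β N (x : ℝ) * f (x + 1) + A2 α β N (x : ℝ) * f (x - 1) + A0 α β N (x : ℝ) * f x

lemma poch_zero' (a : ℝ) : poch a 0 = 1 := Finset.prod_range_zero _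

lemma poch_succ (a : ℝ) (k : ℕ) : poch a (k+1) = poch a k * (a + k) :=
  Finset.prod_range_succ _ _

lemma poch_succ' (a : ℝ) (k : ℕ) : poch a (k+1) = a * poch (a+1) k := by
  rw [poch, Finset.prod_range_succ']
  rw [mul_comm]
  congr 1
  · norm_num
  · apply Finset.prod_congr rfl; intro i _; push_cast; ring

lemma poch_ne (α : ℝ) (hα : ∀ m : ℤ, α ≠ (m : ℝ)) (c : ℤ) (k : ℕ) :
    poch (α - (c : ℝ)) k ≠ 0 := by
  rw [poch, Finset.prod_ne_zero_iff]
  intro i _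
  have := hα (c - i)
  intro h
  apply this
  push_cast
  linarith [h]

set_option maxHeartbeats 1600000 in
theorem statement3 (N : ℕ) (hN : 0 < N) (α β : ℝ) (hα : ∀ m : ℤ, α ≠ (m : ℝ))
    (n : ℕ) (hn : 1 ≤ n) (x : ℤ)
    (g : ℤ → ℝ)
    (hg : g = fun y => (n : ℝ) * ((N : ℝ) - β - (n : ℝ)) * phi α n y
      + (n : ℝ) * ((n : ℝ) - (N : ℝ) - 1) * phi α (n - 1) y) :
    Yop α β N (phi α n) x = Xop α g x := by
  obtain ⟨m, rfl⟩ : ∃ m, n = m + 1 := ⟨n - 1, (Nat.succ_pred_eq_of_pos hn).symm⟩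
  subst hg
  set v := poch (-(x : ℝ)) m with hv
  set s := poch (α - (x : ℝ)) m with hsdef
  -- nonzero facts
  have hs : s ≠ 0 := poch_ne α hα x m
  have hαx : α - (x : ℝ) ≠ 0 := sub_ne_zero.mpr (hα x)
  have hd1 : α - (x : ℝ) + m ≠ 0 := by
    have := hα (x - m); intro h; apply this; push_cast; linarith
  have hd2 : α - (x : ℝ) + m + 1 ≠ 0 := by
    have := hα (x - m - 1); intro h; apply this; push_cast; linarith
  have hd3 : α - (x : ℝ) - 1 ≠ 0 := by
    have := hα (x + 1); intro h; apply this; push_cast; linarith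
  -- casts
  have cxp : ((x + 1 : ℤ) : ℝ) = (x : ℝ) + 1 := by push_cast; ring
  have cxm : ((x - 1 : ℤ) : ℝ) = (x : ℝ) - 1 := by push_cast; ring
  -- phi values at x
  have e1 : phi α m x = v / s := rfl
  have e2 : phi α (m+1) x = v * (-(x : ℝ) + m) / (s * (α - x + m)) := by
    rw [phi, poch_succ, poch_succ]
  -- phi at x+1
  have e3 : phi α (m+1) (x+1) = (-(x : ℝ) - 1) * v / ((α - x - 1) * s) := by
    rw [phi, cxp, poch_succ', poch_succ']
    have h1 : -((x : ℝ) + 1) = (-(x : ℝ) - 1) := by ring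
    have h2 : -((x : ℝ) + 1) + 1 = -(x : ℝ) := by ring
    have h3 : α - ((x : ℝ) + 1) = α - x - 1 := by ring
    have h4 : α - ((x : ℝ) + 1) + 1 = α - x := by ring
    rw [h2, h1, h4, h3]
  -- relations for the shifted bases
  have r1 : (-(x : ℝ)) * poch (-(x : ℝ) + 1) m = v * (-(x : ℝ) + m) := by
    rw [← poch_succ', hv, ← poch_succ]
  have r2 : (α - (x : ℝ)) * poch (α - (x : ℝ) + 1) m = s * (α - (x : ℝ) + m) := by
    rw [← poch_succ', hsdef, ← poch_succ]
  have q2 : poch (α - (x : ℝ) + 1) m = s * (α - (x : ℝ) + m) / (α - (x : ℝ)) := by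
    field_simp
    linarith [r2]
  -- arguments of phi at x-1
  have a1 : -(((x - 1 : ℤ)) : ℝ) = -(x : ℝ) + 1 := by push_cast; ring
  have a2 : α - (((x - 1 : ℤ)) : ℝ) = α - (x : ℝ) + 1 := by push_cast; ring
  by_cases hx : (x : ℝ) = 0
  · -- x = 0 case
    have hx0 : x = 0 := by exact_mod_cast hx
    subst hx0
    simp only [Yop, Xop, A1, A2, A0, Int.cast_zero] at *
    rcases Nat.eq_zero_or_pos m with hm | hm
    · subst hm
      simp only [Nat.add_sub_cancel]
      have p1 : phi α 1 (0+1) = -1 / (α - 1) := by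
        rw [phi]
        norm_num [poch_succ, poch_zero']
      have p2 : phi α 1 0 = 0 := by
        rw [phi]
        norm_num [poch_succ, poch_zero']
      have p0 : phi α 0 0 = 1 := by
        rw [phi]
        norm_num [poch_zero']
      rw [p1, p2, p0]
      have hαm : α - 1 ≠ 0 := by
        intro h; apply hd3; linarith
      push_cast
      field_simp [hαm]
      ring
    · obtain ⟨k, rfl⟩ : ∃ k, m = k + 1 := ⟨m - 1, (Nat.succ_pred_eq_of_pos hm).symm⟩
      simp only [Nat.add_sub_cancel]
      have z1 : phi α (k+1+1) (0+1) = 0 := by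
        rw [phi]
        have : poch (-(((0+1 : ℤ)) : ℝ)) (k+1+1) = 0 := by
          rw [poch_succ']
          norm_num
          rw [poch_succ']
          norm_num
        rw [this]; simp
      have z2 : phi α (k+1+1) 0 = 0 := by
        rw [phi]
        have : poch (-((0 : ℤ) : ℝ)) (k+1+1) = 0 := by
          rw [poch_succ']; norm_num
        rw [this]; simp
      have z3 : phi α (k+1) 0 = 0 := by
        rw [phi]
        have : poch (-((0 : ℤ) : ℝ)) (k+1) = 0 := by
          rw [poch_succ']; norm_num
        rw [this]; simp
      rw [z1, z2, z3]
      ring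
  · -- x ≠ 0 case
    have q1 : poch (-(x : ℝ) + 1) m = v * ((x : ℝ) - m) / (x : ℝ) := by
      have hx' : -(x : ℝ) ≠ 0 := by simpa using hx
      field_simp
      nlinarith [r1]
    have e4 : phi α (m+1) (x-1)
        = v * ((x : ℝ) - m) * (-(x : ℝ) + 1 + m) * (α - (x : ℝ))
          / ((x : ℝ) * (s * (α - (x : ℝ) + m) * (α - (x : ℝ) + 1 + m))) := by
      rw [phi, a1, a2, poch_succ, poch_succ, q1, q2]
      field_simp
    have e5 : phi α m (x-1)
        = v * ((x : ℝ) - m) * (α - (x : ℝ))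
          / ((x : ℝ) * (s * (α - (x : ℝ) + m))) := by
      rw [phi, a1, a2, q1, q2]
      field_simp
    -- multiplied (denominator-free) forms
    have E1 : s * phi α m x = v := by
      rw [e1]; field_simp
    have E2 : s * (α - (x:ℝ) + m) * phi α (m+1) x = v * (-(x:ℝ) + m) := by
      rw [e2]; field_simp
    have E3 : (α - (x:ℝ) - 1) * s * phi α (m+1) (x+1) = (-(x:ℝ) - 1) * v := by
      rw [e3]; field_simp
    have hd2' : α - (x:ℝ) + 1 + (m:ℝ) ≠ 0 := by
      intro h; apply hd2; linarith
    have E4 : (x:ℝ) * s * (α - (x:ℝ) + m) * (α - (x:ℝ) + m + 1) * phi α (m+1) (x-1)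
        = v * ((x:ℝ) - m) * (-(x:ℝ) + 1 + m) * (α - (x:ℝ)) := by
      rw [e4]; field_simp; ring
    have E5 : (x:ℝ) * s * (α - (x:ℝ) + m) * phi α m (x-1)
        = v * ((x:ℝ) - m) * (α - (x:ℝ)) := by
      rw [e5]; field_simp
    have hD : (x:ℝ) * (s * ((α - (x:ℝ) + m) * ((α - (x:ℝ) + m + 1) * (α - (x:ℝ) - 1)))) ≠ 0 :=
      mul_ne_zero hx (mul_ne_zero hs (mul_ne_zero hd1 (mul_ne_zero hd2 hd3)))
    apply mul_left_cancel₀ hD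
    simp only [Yop, Xop, A1, A2, A0, Nat.add_sub_cancel]
    push_cast
    linear_combination
      ((x:ℝ) * (α - x + m) * (α - x + m + 1)) * (((x:ℝ) - α) * ((x:ℝ) - N) * ((x:ℝ) + 1 - α)) * E3
      + (α - (x:ℝ) - 1) * ((x:ℝ) * ((x:ℝ) - α) * ((x:ℝ) + β - α - N)
          + (x:ℝ) * (((m:ℝ)+1) * ((N:ℝ) - β - ((m:ℝ)+1)))) * E4
      + (x:ℝ) * (α - x + m + 1) * (α - (x:ℝ) - 1)
          * (((x:ℝ) - α) * (-2 * (x:ℝ)^2 + (2*α - 1 + 2*(N:ℝ) - β) * x - (N:ℝ) * (α - 1))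
             - ((x:ℝ) - α) * (((m:ℝ)+1) * ((N:ℝ) - β - ((m:ℝ)+1)))) * E2
      + (x:ℝ) * (α - x + m) * (α - x + m + 1) * (α - (x:ℝ) - 1)
          * (-(((x:ℝ) - α)) * (((m:ℝ)+1) * (((m:ℝ)+1) - (N:ℝ) - 1))) * E1
      + (α - x + m + 1) * (α - (x:ℝ) - 1) * (x:ℝ)
          * (((m:ℝ)+1) * (((m:ℝ)+1) - (N:ℝ) - 1)) * E5
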